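/- Let Ω ⊆ ℝⁿ be open and nonempty, h : Ω → ℝ continuous, and ρ : ℝⁿ → [0, ∞) an integrable probability density with support Ω. For r > 0 define ψ_r(k) := (1/r) log ∫_Ω ρ(y) exp(r(⟨k, y⟩ − h(y))) dy and ψ_∞(k) := sup_{y ∈ Ω} (⟨k, y⟩ − h(y)), and set Ω* := {k ∈ ℝⁿ : ψ_∞(k) < ∞}. Then: (i) for every k, the map r ↦ ψ_r(k) is nondecreasing on (0, ∞) and ψ_r(k) ≤ ψ_∞(k); (ii) ψ_r converges to ψ_∞ pointwise on Ω* as r → ∞, and the convergence is uniform on every compact subset of the interior of Ω*. -/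

import Mathlib

open MeasureTheory Filter Metric
open scoped RealInnerProductSpace ENNReal Topology

/-- The rescaled tilted log-moment-generating function
`ψ_r(k) = (1/r) log ∫_Ω ρ(y) exp(r(⟨k,y⟩ − h(y))) dy`, with values in `EReal`. -/
noncomputable def psiR {n : ℕ} (Ω : Set (EuclideanSpace ℝ (Fin n)))
    (ρ h : EuclideanSpace ℝ (Fin n) → ℝ) (r : ℝ) (k : EuclideanSpace ℝ (Fin n)) : EReal :=
  (((1 : ℝ) / r : ℝ) : EReal) *
    ENNReal.log (∫⁻ y in Ω, ENNReal.ofReal (ρ y * Real.exp (r * (⟪k, y⟫ - h y))))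

/-- The limiting support function `ψ_∞(k) = sup_{y ∈ Ω} (⟨k,y⟩ − h(y))`, in `EReal`. -/
noncomputable def psiInf {n : ℕ} (Ω : Set (EuclideanSpace ℝ (Fin n)))
    (h : EuclideanSpace ℝ (Fin n) → ℝ) (k : EuclideanSpace ℝ (Fin n)) : EReal :=
  ⨆ y ∈ Ω, (((⟪k, y⟫ - h y : ℝ)) : EReal)

namespace PsiAux


variable {n : ℕ} {Ω : Set (EuclideanSpace ℝ (Fin n))}
  {h ρ : EuclideanSpace ℝ (Fin n) → ℝ}

lemma coord_le (x : EuclideanSpace ℝ (Fin n)) (i : Fin n) : |x i| ≤ ‖x‖ := by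
  have h1 : ‖x‖ = Real.sqrt (∑ j, ‖x j‖ ^ 2) := by
    rw [EuclideanSpace.norm_eq]
  rw [h1, ← Real.sqrt_sq_eq_abs]
  apply Real.sqrt_le_sqrt
  have : |x i| ^ 2 ≤ ∑ j, ‖x j‖ ^ 2 := by
    refine Finset.single_le_sum (f := fun j => ‖x j‖ ^ 2) (fun j _ => by positivity)
      (Finset.mem_univ i) |>.trans_eq' ?_
    simp [Real.norm_eq_abs]
  simpa using this

lemma psiInf_bot_lt (hΩne : Ω.Nonempty) (k : EuclideanSpace ℝ (Fin n)) :
    (⊥ : EReal) < psiInf Ω h k := by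
  obtain ⟨y₀, hy₀⟩ := hΩne
  refine lt_of_lt_of_le (EReal.bot_lt_coe (⟪k, y₀⟫ - h y₀)) ?_
  exact le_iSup₂ (f := fun y (_ : y ∈ Ω) => (((⟪k, y⟫ - h y : ℝ)) : EReal)) y₀ hy₀

lemma psiInf_eq_phi (hΩne : Ω.Nonempty) (k : EuclideanSpace ℝ (Fin n))
    (hfin : psiInf Ω h k ≠ ⊤) :
    psiInf Ω h k = (((psiInf Ω h k).toReal : ℝ) : EReal) :=
  (EReal.coe_toReal hfin (psiInf_bot_lt hΩne k).ne').symm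

lemma le_phi (hΩne : Ω.Nonempty) {k : EuclideanSpace ℝ (Fin n)}
    (hfin : psiInf Ω h k ≠ ⊤) {y : EuclideanSpace ℝ (Fin n)} (hy : y ∈ Ω) :
    ⟪k, y⟫ - h y ≤ (psiInf Ω h k).toReal := by
  have h1 : (((⟪k, y⟫ - h y : ℝ)) : EReal) ≤ psiInf Ω h k :=
    le_iSup₂ (f := fun y (_ : y ∈ Ω) => (((⟪k, y⟫ - h y : ℝ)) : EReal)) y hy
  rw [psiInf_eq_phi hΩne k hfin] at h1
  exact_mod_cast h1

variable {n : ℕ} {Ω : Set (EuclideanSpace ℝ (Fin n))}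
  {h ρ : EuclideanSpace ℝ (Fin n) → ℝ}

lemma aemeas (hΩo : IsOpen Ω) (hh : ContinuousOn h Ω) (hρint : Integrable ρ)
    (r : ℝ) (k : EuclideanSpace ℝ (Fin n)) :
    AEMeasurable (fun y => ENNReal.ofReal (ρ y * Real.exp (r * (⟪k, y⟫ - h y))))
      (volume.restrict Ω) := by
  have h1 : AEMeasurable h (volume.restrict Ω) := hh.aemeasurable hΩo.measurableSet
  have h2 : Continuous (fun y : EuclideanSpace ℝ (Fin n) => ⟪k, y⟫) :=
    continuous_const.inner continuous_id
  have h3 : AEMeasurable (fun y => ⟪k, y⟫ - h y) (volume.restrict Ω) :=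
    h2.aemeasurable.sub h1
  exact ENNReal.measurable_ofReal.comp_aemeasurable
    ((hρint.aemeasurable.restrict).mul
      (Real.measurable_exp.comp_aemeasurable (aemeasurable_const.mul h3)))

lemma mass_le_one (hρ0 : ∀ y, 0 ≤ ρ y) (hρint : Integrable ρ) (hρ1 : (∫ y, ρ y) = 1) :
    (∫⁻ y in Ω, ENNReal.ofReal (ρ y)) ≤ 1 := by
  refine le_trans (setLIntegral_le_lintegral _ _) ?_
  rw [← ofReal_integral_eq_lintegral_ofReal hρint (Eventually.of_forall hρ0), hρ1,
    ENNReal.ofReal_one]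

lemma psiR_le (hΩo : IsOpen Ω) (hρ0 : ∀ y, 0 ≤ ρ y) (hρint : Integrable ρ)
    (hρ1 : (∫ y, ρ y) = 1)
    {r : ℝ} (hr : 0 < r) {k : EuclideanSpace ℝ (Fin n)} {M : ℝ}
    (hM : ∀ y ∈ Ω, ⟪k, y⟫ - h y ≤ M) : psiR Ω ρ h r k ≤ (M : EReal) := by
  have key : (∫⁻ y in Ω, ENNReal.ofReal (ρ y * Real.exp (r * (⟪k, y⟫ - h y))))
      ≤ ENNReal.ofReal (Real.exp (r * M)) := by
    have step1 : (∫⁻ y in Ω, ENNReal.ofReal (ρ y * Real.exp (r * (⟪k, y⟫ - h y))))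
        ≤ ∫⁻ y in Ω, ENNReal.ofReal (Real.exp (r * M)) * ENNReal.ofReal (ρ y) := by
      refine lintegral_mono_ae ?_
      rw [ae_restrict_iff' hΩo.measurableSet]
      refine Eventually.of_forall (fun y hy => ?_)
      rw [← ENNReal.ofReal_mul (Real.exp_pos _).le]
      refine ENNReal.ofReal_le_ofReal ?_
      rw [mul_comm (Real.exp (r * M))]
      exact mul_le_mul_of_nonneg_left
        (Real.exp_le_exp.2 (mul_le_mul_of_nonneg_left (hM y hy) hr.le)) (hρ0 y)
    refine step1.trans ?_
    rw [lintegral_const_mul' _ _ ENNReal.ofReal_ne_top]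
    calc ENNReal.ofReal (Real.exp (r * M)) * (∫⁻ y in Ω, ENNReal.ofReal (ρ y))
        ≤ ENNReal.ofReal (Real.exp (r * M)) * 1 :=
          mul_le_mul_right (mass_le_one hρ0 hρint hρ1) _
      _ = _ := mul_one _
  have hlog : ENNReal.log (∫⁻ y in Ω, ENNReal.ofReal (ρ y * Real.exp (r * (⟪k, y⟫ - h y))))
      ≤ ((r * M : ℝ) : EReal) := by
    refine (ENNReal.log_monotone key).trans_eq ?_
    rw [ENNReal.log_ofReal_of_pos (Real.exp_pos _), Real.log_exp]
  calc psiR Ω ρ h r k ≤ (((1 : ℝ) / r : ℝ) : EReal) * ((r * M : ℝ) : EReal) :=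
        mul_le_mul_of_nonneg_left hlog (by exact EReal.coe_nonneg.2 (by positivity))
    _ = ((1 / r * (r * M) : ℝ) : EReal) := by rw [← EReal.coe_mul]
    _ = (M : EReal) := by congr 1; field_simp

lemma psiR_mono (hΩo : IsOpen Ω) (hh : ContinuousOn h Ω) (hρ0 : ∀ y, 0 ≤ ρ y)
    (hρint : Integrable ρ) (hρ1 : (∫ y, ρ y) = 1)
    {r s : ℝ} (hr : 0 < r) (hrs : r ≤ s) (k : EuclideanSpace ℝ (Fin n)) :
    psiR Ω ρ h r k ≤ psiR Ω ρ h s k := by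
  rcases eq_or_lt_of_le hrs with rfl | hlt
  · exact le_refl _
  have hs : 0 < s := hr.trans hlt
  have aemeas := fun r : ℝ => aemeas hΩo hh hρint r k
  have mass_le_one := mass_le_one (Ω := Ω) hρ0 hρint hρ1
  have key : (∫⁻ y in Ω, ENNReal.ofReal (ρ y * Real.exp (r * (⟪k, y⟫ - h y))))
      ≤ (∫⁻ y in Ω, ENNReal.ofReal (ρ y * Real.exp (s * (⟪k, y⟫ - h y)))) ^ (r / s) := by

    have hs : 0 < s := hr.trans hlt
    set θ : ℝ := r / s with hθdef
    have hθ0 : 0 < θ := by positivity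
    have hθ1 : θ < 1 := by rw [hθdef, div_lt_one hs]; exact hlt
    have hpq : (1/θ).HolderConjugate (1/(1-θ)) := by
      rw [Real.holderConjugate_iff]
      constructor
      · rw [lt_div_iff₀ hθ0]; linarith
      · rw [one_div, one_div, inv_inv, inv_inv]; ring
    have hf : AEMeasurable
        (fun y => (ENNReal.ofReal (ρ y * Real.exp (s * (⟪k, y⟫ - h y)))) ^ θ)
        (volume.restrict Ω) :=
      ENNReal.continuous_rpow_const.measurable.comp_aemeasurable (aemeas s)
    have hg : AEMeasurable (fun y => (ENNReal.ofReal (ρ y)) ^ (1 - θ)) (volume.restrict Ω) :=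
      ENNReal.continuous_rpow_const.measurable.comp_aemeasurable
        (ENNReal.measurable_ofReal.comp_aemeasurable hρint.aemeasurable.restrict)
    have H := ENNReal.lintegral_mul_le_Lp_mul_Lq (volume.restrict Ω) hpq hf hg
    have hptw : ∀ y, ((fun y => (ENNReal.ofReal (ρ y * Real.exp (s * (⟪k, y⟫ - h y)))) ^ θ) *
        (fun y => (ENNReal.ofReal (ρ y)) ^ (1 - θ))) y
        = ENNReal.ofReal (ρ y * Real.exp (r * (⟪k, y⟫ - h y))) := by
      intro y
      simp only [Pi.mul_apply]
      rw [ENNReal.ofReal_rpow_of_nonneg (mul_nonneg (hρ0 y) (Real.exp_pos _).le) hθ0.le,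
        ENNReal.ofReal_rpow_of_nonneg (hρ0 y) (by linarith),
        ← ENNReal.ofReal_mul (Real.rpow_nonneg (mul_nonneg (hρ0 y) (Real.exp_pos _).le) _)]
      congr 1
      rw [Real.mul_rpow (hρ0 y) (Real.exp_pos _).le, ← Real.exp_mul]
      have e1 : ρ y ^ θ * Real.exp (s * (⟪k, y⟫ - h y) * θ) * ρ y ^ (1 - θ)
          = (ρ y ^ θ * ρ y ^ (1 - θ)) * Real.exp (s * (⟪k, y⟫ - h y) * θ) := by ring
      rw [e1, ← Real.rpow_add' (hρ0 y) (by norm_num), ]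
      have e2 : θ + (1 - θ) = (1:ℝ) := by ring
      rw [e2, Real.rpow_one]
      congr 1
      rw [hθdef]
      field_simp
    have hfp : ∀ y, ((fun y => (ENNReal.ofReal (ρ y * Real.exp (s * (⟪k, y⟫ - h y)))) ^ θ) y) ^ (1/θ)
        = ENNReal.ofReal (ρ y * Real.exp (s * (⟪k, y⟫ - h y))) := by
      intro y
      rw [← ENNReal.rpow_mul, mul_one_div, div_self hθ0.ne', ENNReal.rpow_one]
    have hgq : ∀ y, ((fun y => (ENNReal.ofReal (ρ y)) ^ (1-θ)) y) ^ (1/(1-θ))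
        = ENNReal.ofReal (ρ y) := by
      intro y
      rw [← ENNReal.rpow_mul, mul_one_div, div_self (by linarith : (1:ℝ) - θ ≠ 0),
        ENNReal.rpow_one]
    simp only [hptw, hfp, hgq] at H
    rw [one_div_one_div, one_div_one_div] at H
    refine H.trans ?_
    calc (∫⁻ y in Ω, ENNReal.ofReal (ρ y * Real.exp (s * (⟪k, y⟫ - h y)))) ^ θ *
        (∫⁻ y in Ω, ENNReal.ofReal (ρ y)) ^ (1 - θ)
        ≤ (∫⁻ y in Ω, ENNReal.ofReal (ρ y * Real.exp (s * (⟪k, y⟫ - h y)))) ^ θ * 1 := by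
          refine mul_le_mul_right ?_ _
          exact ENNReal.rpow_le_one mass_le_one (by linarith)
      _ = _ := mul_one _
  have hlog : ENNReal.log (∫⁻ y in Ω, ENNReal.ofReal (ρ y * Real.exp (r * (⟪k, y⟫ - h y))))
      ≤ ((r/s : ℝ) : EReal) *
        ENNReal.log (∫⁻ y in Ω, ENNReal.ofReal (ρ y * Real.exp (s * (⟪k, y⟫ - h y)))) := by
    refine (ENNReal.log_monotone key).trans_eq ?_
    exact ENNReal.log_rpow
  calc psiR Ω ρ h r k
      ≤ (((1:ℝ)/r : ℝ) : EReal) * (((r/s : ℝ) : EReal) *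
        ENNReal.log (∫⁻ y in Ω, ENNReal.ofReal (ρ y * Real.exp (s * (⟪k, y⟫ - h y))))) :=
        mul_le_mul_of_nonneg_left hlog (EReal.coe_nonneg.2 (by positivity))
    _ = ((1/r * (r/s) : ℝ) : EReal) *
        ENNReal.log (∫⁻ y in Ω, ENNReal.ofReal (ρ y * Real.exp (s * (⟪k, y⟫ - h y)))) := by
        rw [← mul_assoc, ← EReal.coe_mul]
    _ = psiR Ω ρ h s k := by
        unfold psiR
        congr 2
        field_simp


lemma psiR_lower (hΩo : IsOpen Ω) (hh : ContinuousOn h Ω)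
    (hρ0 : ∀ y, 0 ≤ ρ y) (hρint : Integrable ρ) (hρ1 : (∫ y, ρ y) = 1)
    (hρsupp : ∀ᵐ y, (y ∈ Ω → 0 < ρ y) ∧ (y ∉ Ω → ρ y = 0))
    (k₀ : EuclideanSpace ℝ (Fin n)) {c : ℝ} (hc : (c : EReal) < psiInf Ω h k₀) :
    ∃ η > (0:ℝ), ∃ R : ℝ, ∀ r : ℝ, R ≤ r → ∀ k : EuclideanSpace ℝ (Fin n),
      dist k k₀ ≤ η → (c : EReal) ≤ psiR Ω ρ h r k := by
  -- find a point y₀ with value > c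
  rw [psiInf, lt_iSup_iff] at hc
  obtain ⟨y₀, hc⟩ := hc
  rw [lt_iSup_iff] at hc
  obtain ⟨hy₀, hc⟩ := hc
  rw [EReal.coe_lt_coe_iff] at hc
  set a : ℝ := ⟪k₀, y₀⟫ - h y₀ with ha
  -- a ball around y₀ where the function is > (c+a)/2
  have hcont : ContinuousAt (fun y => ⟪k₀, y⟫ - h y) y₀ :=
    ((continuous_const.inner continuous_id).continuousAt).sub
      (hh.continuousAt (hΩo.mem_nhds hy₀))
  have h1 : ∀ᶠ y in 𝓝 y₀, (c + a)/2 < ⟪k₀, y⟫ - h y :=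
    hcont (Ioi_mem_nhds (by show (c + a)/2 < ⟪k₀, y₀⟫ - h y₀; linarith [ha.ge, ha.le]))
  have h2 : ∀ᶠ y in 𝓝 y₀, y ∈ Ω := hΩo.mem_nhds hy₀
  obtain ⟨δ₀, hδ₀, hball⟩ := Metric.eventually_nhds_iff_ball.mp (h1.and h2)
  set B : Set (EuclideanSpace ℝ (Fin n)) := closedBall y₀ (δ₀/2) with hBdef
  have hBsub : B ⊆ ball y₀ δ₀ := closedBall_subset_ball (by linarith)
  have hBprop : ∀ y ∈ B, ((c + a)/2 < ⟪k₀, y⟫ - h y) ∧ y ∈ Ω :=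
    fun y hy => hball y (hBsub hy)
  have hBΩ : B ⊆ Ω := fun y hy => (hBprop y hy).2
  set C : ℝ := ‖y₀‖ + δ₀ with hC
  clear_value a
  have hC0 : 0 < C := by rw [hC]; have := norm_nonneg y₀; linarith
  have hyC : ∀ y ∈ B, ‖y‖ ≤ C := by
    intro y hy
    have hd : dist y y₀ ≤ δ₀/2 := mem_closedBall.mp hy
    have h1 : ‖y‖ ≤ ‖y₀‖ + ‖y - y₀‖ := by
      calc ‖y‖ = ‖y₀ + (y - y₀)‖ := by congr 1; abel
        _ ≤ ‖y₀‖ + ‖y - y₀‖ := norm_add_le _ _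
    rw [← dist_eq_norm] at h1
    rw [hC]
    linarith
  clear_value C
  set η : ℝ := (a - c)/(8*(C+1)) with hη
  clear_value η
  have hη0 : 0 < η := by rw [hη]; exact div_pos (by linarith) (by linarith)
  set c₁ : ℝ := c + (a - c)/4 with hc₁
  clear_value c₁
  -- pointwise bound
  have hpt : ∀ k : EuclideanSpace ℝ (Fin n), dist k k₀ ≤ η → ∀ y ∈ B,
      c₁ ≤ ⟪k, y⟫ - h y := by
    intro k hk y hy
    have h3 : |⟪k - k₀, y⟫| ≤ ‖k - k₀‖ * ‖y‖ := abs_real_inner_le_norm _ _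
    have h4 : ‖k - k₀‖ ≤ η := by rwa [← dist_eq_norm]
    have h5 : ‖k - k₀‖ * ‖y‖ ≤ η * C :=
      mul_le_mul h4 (hyC y hy) (norm_nonneg _) hη0.le
    have h6 : η * C ≤ (a - c)/8 := by
      rw [hη]
      rw [div_mul_eq_mul_div, div_le_div_iff₀ (by positivity) (by norm_num)]
      nlinarith
    have h7 : ⟪k, y⟫ - ⟪k₀, y⟫ = ⟪k - k₀, y⟫ := (inner_sub_left _ _ _).symm
    have h8 := (hBprop y hy).1
    have h9 : -((a-c)/8) ≤ ⟪k - k₀, y⟫ := by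
      have := (abs_le.mp (h3.trans (h5.trans h6))).1
      linarith [this]
    have : ⟪k, y⟫ - h y = (⟪k₀, y⟫ - h y) + ⟪k - k₀, y⟫ := by rw [← h7]; ring
    rw [this]
    linarith
  -- the mass of the ball
  set m : ℝ≥0∞ := ∫⁻ y in B, ENNReal.ofReal (ρ y) with hm
  have hmmeas : AEMeasurable (fun y => ENNReal.ofReal (ρ y)) (volume.restrict B) :=
    ENNReal.measurable_ofReal.comp_aemeasurable hρint.aemeasurable.restrict
  have hm0 : m ≠ 0 := by
    intro hm0
    have h0 := (lintegral_eq_zero_iff' hmmeas).mp hm0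
    have hmem : ∀ᵐ y ∂(volume.restrict B), y ∈ B :=
      ae_restrict_mem measurableSet_closedBall
    have hsupp' := ae_restrict_of_ae (μ := volume) (s := B) hρsupp
    have hfalse : ∀ᵐ y ∂(volume.restrict B), False := by
      filter_upwards [h0, hmem, hsupp'] with y h0y hmy hsy
      have hρy := hsy.1 (hBΩ hmy)
      simp only [Pi.zero_apply, ENNReal.ofReal_eq_zero] at h0y
      linarith
    rw [ae_iff] at hfalse
    simp only [not_false_iff, Set.setOf_true] at hfalse
    rw [Measure.restrict_apply_univ] at hfalse
    exact absurd hfalse (measure_closedBall_pos volume y₀ (by linarith)).ne'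
  have hmtop : m ≠ ⊤ := by
    refine ne_top_of_le_ne_top (by simp : (1:ℝ≥0∞) ≠ ⊤) ?_
    calc m ≤ ∫⁻ y in Ω, ENNReal.ofReal (ρ y) := lintegral_mono_set hBΩ
      _ ≤ 1 := by
          refine le_trans (setLIntegral_le_lintegral _ _) ?_
          rw [← ofReal_integral_eq_lintegral_ofReal hρint (Eventually.of_forall hρ0), hρ1,
            ENNReal.ofReal_one]
  set Lm : ℝ := Real.log m.toReal with hLm
  have hlogm : ENNReal.log m = (Lm : EReal) := by
    rw [ENNReal.log_pos_real hm0 hmtop]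
  refine ⟨η, hη0, max 1 ((-Lm) * 4 / (a - c)), ?_⟩
  intro r hr k hk
  have hr1 : (1:ℝ) ≤ r := le_trans (le_max_left _ _) hr
  have hr0 : 0 < r := lt_of_lt_of_le one_pos hr1
  -- integral lower bound
  have hlow : ENNReal.ofReal (Real.exp (r * c₁)) * m
      ≤ ∫⁻ y in Ω, ENNReal.ofReal (ρ y * Real.exp (r * (⟪k, y⟫ - h y))) := by
    rw [hm, ← lintegral_const_mul' _ _ ENNReal.ofReal_ne_top]
    refine le_trans ?_ (lintegral_mono_set hBΩ)
    refine lintegral_mono_ae ?_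
    rw [ae_restrict_iff' measurableSet_closedBall]
    refine Eventually.of_forall (fun y hy => ?_)
    rw [← ENNReal.ofReal_mul (Real.exp_pos _).le]
    refine ENNReal.ofReal_le_ofReal ?_
    rw [mul_comm]
    exact mul_le_mul_of_nonneg_left
      (Real.exp_le_exp.2 (mul_le_mul_of_nonneg_left (hpt k hk y hy) hr0.le)) (hρ0 y)
  have hlog : ((r * c₁ + Lm : ℝ) : EReal)
      ≤ ENNReal.log (∫⁻ y in Ω, ENNReal.ofReal (ρ y * Real.exp (r * (⟪k, y⟫ - h y)))) := by
    refine le_trans (le_of_eq ?_) (ENNReal.log_monotone hlow)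
    rw [ENNReal.log_mul_add, ENNReal.log_ofReal_of_pos (Real.exp_pos _), Real.log_exp, hlogm,
      ← EReal.coe_add]
  have final : (c : ℝ) ≤ 1/r * (r * c₁ + Lm) := by
    have hra : (-Lm) * 4 / (a - c) ≤ r := le_trans (le_max_right _ _) hr
    have hac : 0 < a - c := by linarith
    have h10 : -Lm * 4 ≤ r * (a - c) := by
      rw [div_le_iff₀ hac] at hra; linarith
    rw [one_div, inv_mul_eq_div, le_div_iff₀ hr0]
    rw [hc₁]
    nlinarith
  calc (c : EReal) ≤ ((1/r * (r * c₁ + Lm) : ℝ) : EReal) := EReal.coe_le_coe_iff.2 final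
    _ = (((1:ℝ)/r : ℝ) : EReal) * ((r * c₁ + Lm : ℝ) : EReal) := EReal.coe_mul _ _
    _ ≤ psiR Ω ρ h r k := mul_le_mul_of_nonneg_left hlog (EReal.coe_nonneg.2 (by positivity))



lemma tendsto_psiR (hΩo : IsOpen Ω) (hΩne : Ω.Nonempty) (hh : ContinuousOn h Ω)
    (hρ0 : ∀ y, 0 ≤ ρ y) (hρint : Integrable ρ) (hρ1 : (∫ y, ρ y) = 1)
    (hρsupp : ∀ᵐ y, (y ∈ Ω → 0 < ρ y) ∧ (y ∉ Ω → ρ y = 0))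
    (k : EuclideanSpace ℝ (Fin n)) (hfin : psiInf Ω h k < ⊤) :
    Tendsto (fun r : ℝ => psiR Ω ρ h r k) atTop (𝓝 (psiInf Ω h k)) := by
  set M : ℝ := (psiInf Ω h k).toReal with hM
  have heq : psiInf Ω h k = (M : EReal) := psiInf_eq_phi hΩne k hfin.ne
  rw [heq]
  refine tendsto_order.2 ⟨?_, ?_⟩
  · intro b hb
    obtain ⟨cR, hbc, hcM⟩ : ∃ cR : ℝ, b < (cR : EReal) ∧ cR < M := by
      induction b using EReal.rec with
      | bot => exact ⟨M - 1, EReal.bot_lt_coe _, by linarith⟩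
      | coe x =>
          have hxM : x < M := EReal.coe_lt_coe_iff.1 hb
          exact ⟨(x + M)/2, EReal.coe_lt_coe_iff.2 (by linarith), by linarith⟩
      | top => exact absurd hb (by simp)
    have hc : (cR : EReal) < psiInf Ω h k := by
      rw [heq]; exact EReal.coe_lt_coe_iff.2 hcM
    obtain ⟨η, hη, R, hR⟩ := psiR_lower hΩo hh hρ0 hρint hρ1 hρsupp k hc
    filter_upwards [eventually_ge_atTop R] with r hr
    exact lt_of_lt_of_le hbc (hR r hr k (by rw [dist_self]; exact hη.le))
  · intro b hb
    filter_upwards [eventually_ge_atTop 1] with r hr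
    refine lt_of_le_of_lt ?_ hb
    exact psiR_le hΩo hρ0 hρint hρ1 (lt_of_lt_of_le one_pos hr)
      (fun y hy => le_phi hΩne hfin.ne hy)


lemma psiInf_usc (hΩne : Ω.Nonempty) {k₀ : EuclideanSpace ℝ (Fin n)}
    (hk₀ : k₀ ∈ interior {k | psiInf Ω h k < ⊤}) {ε2 : ℝ} (hε2 : 0 < ε2) :
    ∃ η > (0:ℝ), ∀ k, dist k k₀ ≤ η →
      psiInf Ω h k ≤ (((psiInf Ω h k₀).toReal + ε2 : ℝ) : EReal) := by
  obtain ⟨δ, hδ, hδsub⟩ := Metric.isOpen_iff.mp isOpen_interior k₀ hk₀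
  set β : ℝ := δ/(2*(Real.sqrt n + 1)) with hβ
  have hβ0 : 0 < β := div_pos hδ (by positivity)
  set w : (Fin n → Bool) → EuclideanSpace ℝ (Fin n) :=
    fun σ => WithLp.toLp 2 (fun i => if σ i then β else -β) with hw
  have hwnorm : ∀ σ, ‖w σ‖ ≤ δ/2 := by
    intro σ
    have h1 : ‖w σ‖ = Real.sqrt (∑ i, ‖w σ i‖ ^ 2) := by rw [EuclideanSpace.norm_eq]
    have h2 : ∀ i, ‖w σ i‖ ^ 2 = β ^ 2 := by
      intro i
      by_cases hσ : σ i <;> simp [hw, hσ, Real.norm_eq_abs, sq_abs]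
    rw [h1]
    simp only [h2, Finset.sum_const, Finset.card_univ, Fintype.card_fin, nsmul_eq_mul]
    rw [show ((n:ℝ)) * β^2 = (Real.sqrt n)^2 * β^2 by rw [Real.sq_sqrt (Nat.cast_nonneg n)]]
    rw [← mul_pow, Real.sqrt_sq (by positivity)]
    rw [hβ]
    have hsn : (0:ℝ) ≤ Real.sqrt n := Real.sqrt_nonneg _
    rw [mul_div_assoc']
    rw [div_le_div_iff₀ (by positivity) (by norm_num)]
    nlinarith
  have hvD : ∀ σ, psiInf Ω h (k₀ + w σ) < ⊤ := by
    intro σ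
    have : k₀ + w σ ∈ Metric.ball k₀ δ := by
      rw [Metric.mem_ball, dist_eq_norm]
      have : k₀ + w σ - k₀ = w σ := by abel
      rw [this]
      linarith [hwnorm σ]
    have h5 : k₀ + w σ ∈ {k | psiInf Ω h k < ⊤} := interior_subset (hδsub this)
    exact h5
  have hφ₀fin : psiInf Ω h k₀ < ⊤ := by
    have h5 : k₀ ∈ {k | psiInf Ω h k < ⊤} := interior_subset hk₀
    exact h5
  set φ₀ : ℝ := (psiInf Ω h k₀).toReal with hφ₀
  have hne : (Finset.univ : Finset (Fin n → Bool)).Nonempty := Finset.univ_nonempty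
  set M : ℝ := Finset.univ.sup' hne (fun σ => (psiInf Ω h (k₀ + w σ)).toReal) with hMdef
  -- Claim A
  have claimA : ∀ k : EuclideanSpace ℝ (Fin n), dist k k₀ ≤ β → ∀ y ∈ Ω,
      ⟪k, y⟫ - h y ≤ M := by
    intro k hk y hy
    set σy : Fin n → Bool := fun i => decide (0 ≤ y i) with hσy
    have hcoord : ∀ i, |k i - k₀ i| ≤ β := by
      intro i
      have h1 : |(k - k₀) i| ≤ ‖k - k₀‖ := coord_le _ i
      rw [PiLp.sub_apply] at h1
      rw [← dist_eq_norm] at h1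
      exact h1.trans hk
    have hterm : ∀ i, k i * y i ≤ (k₀ + w σy) i * y i := by
      intro i
      have hwa : (k₀ + w σy) i = k₀ i + (if σy i then β else -β) := by
        simp [hw]
      rw [hwa]
      have h1 : (k i - k₀ i) * y i ≤ β * |y i| := by
        calc (k i - k₀ i) * y i ≤ |(k i - k₀ i) * y i| := le_abs_self _
          _ = |k i - k₀ i| * |y i| := abs_mul _ _
          _ ≤ β * |y i| := mul_le_mul_of_nonneg_right (hcoord i) (abs_nonneg _)
      have h2 : (if σy i then β else -β) * y i = β * |y i| := by
        by_cases hyi : 0 ≤ y i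
        · have he : σy i = true := by simp [hσy, hyi]
          rw [he, if_pos rfl, abs_of_nonneg hyi]
        · have he : σy i = false := by simp [hσy, hyi]
          rw [he]
          simp only [Bool.false_eq_true, if_false]
          rw [abs_of_neg (lt_of_not_ge hyi)]
          ring
      nlinarith [h1, h2]
    have hinner : ⟪k, y⟫ ≤ ⟪k₀ + w σy, y⟫ := by
      rw [show (⟪k, y⟫ : ℝ) = ∑ i, k i * y i by
          simp [PiLp.inner_apply, RCLike.inner_apply, conj_trivial]
          exact Finset.sum_congr rfl (fun i _ => mul_comm _ _),
        show (⟪k₀ + w σy, y⟫ : ℝ) = ∑ i, (k₀ + w σy) i * y i by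
          simp [PiLp.inner_apply, RCLike.inner_apply, conj_trivial]
          exact Finset.sum_congr rfl (fun i _ => mul_comm _ _)]
      exact Finset.sum_le_sum (fun i _ => hterm i)
    have h3 : ⟪k₀ + w σy, y⟫ - h y ≤ (psiInf Ω h (k₀ + w σy)).toReal :=
      le_phi hΩne (hvD σy).ne hy
    have h4 : (psiInf Ω h (k₀ + w σy)).toReal ≤ M :=
      Finset.le_sup' (f := fun σ => (psiInf Ω h (k₀ + w σ)).toReal) (Finset.mem_univ σy)
    linarith
  -- Claim B
  set D : ℝ := |M| + |φ₀| + 1 with hD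
  have hD0 : 0 < D := by positivity
  set t : ℝ := min 1 (ε2/D) with ht
  have ht0 : 0 < t := lt_min one_pos (by positivity)
  have ht1 : t ≤ 1 := min_le_left _ _
  refine ⟨t * β, by positivity, ?_⟩
  intro k hk
  set k' : EuclideanSpace ℝ (Fin n) := k₀ + t⁻¹ • (k - k₀) with hk'
  have hk'close : dist k' k₀ ≤ β := by
    rw [dist_eq_norm]
    have : k' - k₀ = t⁻¹ • (k - k₀) := by rw [hk']; abel
    rw [this, norm_smul, Real.norm_eq_abs, abs_of_pos (inv_pos.2 ht0)]
    rw [← dist_eq_norm] at *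
    calc t⁻¹ * dist k k₀ ≤ t⁻¹ * (t * β) :=
          mul_le_mul_of_nonneg_left hk (inv_pos.2 ht0).le
      _ = β := by field_simp
  have hA := claimA k' hk'close
  refine iSup₂_le (fun y hy => ?_)
  rw [EReal.coe_le_coe_iff]
  have hginner : ⟪k, y⟫ = (1 - t) * ⟪k₀, y⟫ + t * ⟪k', y⟫ := by
    have e1 : (⟪k', y⟫ : ℝ) = ⟪k₀, y⟫ + t⁻¹ * ⟪k - k₀, y⟫ := by
      rw [hk', inner_add_left, real_inner_smul_left]
    have e2 : (⟪k - k₀, y⟫ : ℝ) = ⟪k, y⟫ - ⟪k₀, y⟫ := inner_sub_left _ _ _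
    rw [e1, e2]
    field_simp
    ring
  have hg0 : ⟪k₀, y⟫ - h y ≤ φ₀ := le_phi hΩne hφ₀fin.ne hy
  have hg' : ⟪k', y⟫ - h y ≤ M := hA y hy
  have hMφ : M - φ₀ ≤ D := by
    rw [hD]
    have := le_abs_self M
    have := neg_abs_le φ₀
    linarith
  have htD : t * (M - φ₀) ≤ ε2 := by
    rcases le_or_gt (M - φ₀) 0 with hle | hgt
    · exact (mul_nonpos_of_nonneg_of_nonpos ht0.le hle).trans hε2.le
    · calc t * (M - φ₀) ≤ (ε2/D) * (M - φ₀) :=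
            mul_le_mul_of_nonneg_right (min_le_right _ _) hgt.le
        _ ≤ (ε2/D) * D := mul_le_mul_of_nonneg_left hMφ (by positivity)
        _ = ε2 := by field_simp
  have : ⟪k, y⟫ - h y = (1 - t) * (⟪k₀, y⟫ - h y) + t * (⟪k', y⟫ - h y) := by
    rw [hginner]; ring
  rw [this]
  have hfinal : (1 - t) * (⟪k₀, y⟫ - h y) + t * (⟪k', y⟫ - h y)
      ≤ (1 - t) * φ₀ + t * M := by
    have b1 : (1 - t) * (⟪k₀, y⟫ - h y) ≤ (1 - t) * φ₀ :=
      mul_le_mul_of_nonneg_left hg0 (by linarith)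
    have b2 : t * (⟪k', y⟫ - h y) ≤ t * M := mul_le_mul_of_nonneg_left hg' ht0.le
    linarith
  have : (1 - t) * φ₀ + t * M = φ₀ + t * (M - φ₀) := by ring
  linarith [hfinal, htD]

end PsiAux

/-- monotone and locally uniform convergence of `ψ_r` to `ψ_∞`:
(i) `r ↦ ψ_r(k)` is nondecreasing on `(0,∞)` and bounded by `ψ_∞(k)`;
(ii) `ψ_r → ψ_∞` pointwise on `Ω* = {ψ_∞ < ∞}`, uniformly on compact subsets of the
interior of `Ω*`. -/
theorem psiR_monotone_tendsto_psiInf (n : ℕ)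
    (Ω : Set (EuclideanSpace ℝ (Fin n))) (hΩo : IsOpen Ω) (hΩne : Ω.Nonempty)
    (h : EuclideanSpace ℝ (Fin n) → ℝ) (hh : ContinuousOn h Ω)
    (ρ : EuclideanSpace ℝ (Fin n) → ℝ) (hρ0 : ∀ y, 0 ≤ ρ y)
    (hρint : Integrable ρ) (hρ1 : (∫ y, ρ y) = 1)
    (hρsupp : ∀ᵐ y, (y ∈ Ω → 0 < ρ y) ∧ (y ∉ Ω → ρ y = 0)) :
    (∀ k : EuclideanSpace ℝ (Fin n),
      (∀ r s : ℝ, 0 < r → r ≤ s → psiR Ω ρ h r k ≤ psiR Ω ρ h s k) ∧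
      (∀ r : ℝ, 0 < r → psiR Ω ρ h r k ≤ psiInf Ω h k)) ∧
    (∀ k : EuclideanSpace ℝ (Fin n), psiInf Ω h k < ⊤ →
      Tendsto (fun r : ℝ => psiR Ω ρ h r k) atTop (𝓝 (psiInf Ω h k))) ∧
    (∀ K : Set (EuclideanSpace ℝ (Fin n)), IsCompact K →
      K ⊆ interior {k | psiInf Ω h k < ⊤} →
      ∀ ε : ℝ, 0 < ε → ∃ R : ℝ, ∀ r : ℝ, R ≤ r → ∀ k ∈ K,
        psiInf Ω h k ≤ psiR Ω ρ h r k + ((ε : ℝ) : EReal)) := by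

  refine ⟨?_, ?_, ?_⟩
  · intro k
    refine ⟨fun r s hr hrs => PsiAux.psiR_mono hΩo hh hρ0 hρint hρ1 hr hrs k, ?_⟩
    intro r hr
    by_cases hfin : psiInf Ω h k = ⊤
    · rw [hfin]; exact le_top
    · rw [PsiAux.psiInf_eq_phi hΩne k hfin]
      exact PsiAux.psiR_le hΩo hρ0 hρint hρ1 hr (fun y hy => PsiAux.le_phi hΩne hfin hy)
  · intro k hfin
    exact PsiAux.tendsto_psiR hΩo hΩne hh hρ0 hρint hρ1 hρsupp k hfin
  · intro K hK hKsub ε hε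
    have key : ∀ k₀ (hk₀ : k₀ ∈ K), ∃ η > (0:ℝ), ∃ R : ℝ, ∀ r, R ≤ r →
        ∀ k ∈ Metric.ball k₀ η, psiInf Ω h k ≤ psiR Ω ρ h r k + ((ε:ℝ) : EReal) := by
      intro k₀ hk₀
      have hk₀i := hKsub hk₀
      have hφfin : psiInf Ω h k₀ < ⊤ := by
        have h5 : k₀ ∈ {k | psiInf Ω h k < ⊤} := interior_subset hk₀i
        exact h5
      obtain ⟨η₁, hη₁, husc⟩ := PsiAux.psiInf_usc hΩne hk₀i (half_pos hε)
      have hc : (((psiInf Ω h k₀).toReal - ε/2 : ℝ) : EReal) < psiInf Ω h k₀ := by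
        conv_rhs => rw [PsiAux.psiInf_eq_phi hΩne k₀ hφfin.ne]
        exact EReal.coe_lt_coe_iff.2 (by linarith)
      obtain ⟨η₂, hη₂, R, hR⟩ := PsiAux.psiR_lower hΩo hh hρ0 hρint hρ1 hρsupp k₀ hc
      refine ⟨min η₁ η₂, lt_min hη₁ hη₂, R, ?_⟩
      intro r hr k hk
      rw [Metric.mem_ball] at hk
      have hk1 : dist k k₀ ≤ η₁ := le_trans hk.le (min_le_left _ _)
      have hk2 : dist k k₀ ≤ η₂ := le_trans hk.le (min_le_right _ _)
      calc psiInf Ω h k ≤ (((psiInf Ω h k₀).toReal + ε/2 : ℝ) : EReal) := husc k hk1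
        _ = (((psiInf Ω h k₀).toReal - ε/2 + ε : ℝ) : EReal) :=
            congrArg (fun x : ℝ => (x : EReal)) (by ring)
        _ = (((psiInf Ω h k₀).toReal - ε/2 : ℝ) : EReal) + ((ε : ℝ) : EReal) := by
            rw [← EReal.coe_add]
        _ ≤ psiR Ω ρ h r k + ((ε:ℝ) : EReal) := add_le_add_left (hR r hr k hk2) _
    choose η hη R hR using key
    obtain ⟨t, ht⟩ := hK.elim_nhds_subcover' (fun x hx => Metric.ball x (η x hx))
      (fun x hx => Metric.ball_mem_nhds x (hη x hx))
    have hex : ∃ Rmax : ℝ, ∀ x ∈ t, R x.1 x.2 ≤ Rmax := by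
      obtain ⟨Rmax, hRmax⟩ := (t.image (fun x : ↑K => R x.1 x.2)).exists_le
      exact ⟨Rmax, fun x hx => hRmax _ (Finset.mem_image_of_mem _ hx)⟩
    obtain ⟨Rmax, hRmax⟩ := hex
    refine ⟨Rmax, fun r hr k hk => ?_⟩
    obtain ⟨x, hxt, hxk⟩ := Set.mem_iUnion₂.mp (ht hk)
    exact hR x.1 x.2 r (le_trans (hRmax x hxt) hr) k hxk
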